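/- For every finite simple graph G with maximum degree Δ ≥ 1, there exists a Δ-regular finite simple graph H containing G as a subgraph with |V(H)| < |V(G)| + 4Δ. -/

import Mathlib

set_option linter.unusedSectionVars false
set_option maxHeartbeats 1000000
open SimpleGraph Finset

section Helpers
variable {W : Type} [Fintype W] [DecidableEq W]

private lemma ncard_ns (H : SimpleGraph W) [DecidableRel H.Adj] (w : W) :
    (H.neighborSet w).ncard = H.degree w := by
  rw [Set.ncard_eq_toFinset_card', SimpleGraph.degree, neighborFinset_def]

section AddHelpers
variable (H : SimpleGraph W) {u v : W} (hne : u ≠ v) (hna : ¬H.Adj u v)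
include hne hna

private lemma add_ns_u : (H ⊔ edge u v).neighborSet u = insert v (H.neighborSet u) := by
  ext x
  simp only [mem_neighborSet, sup_adj, edge_adj, Set.mem_insert_iff]
  aesop

private lemma add_ns_v : (H ⊔ edge u v).neighborSet v = insert u (H.neighborSet v) := by
  ext x
  simp only [mem_neighborSet, sup_adj, edge_adj, Set.mem_insert_iff]
  aesop

private lemma add_ns_other {w : W} (hwu : w ≠ u) (hwv : w ≠ v) :
    (H ⊔ edge u v).neighborSet w = H.neighborSet w := by
  ext x
  simp only [mem_neighborSet, sup_adj, edge_adj]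
  aesop

private lemma add_es : (H ⊔ edge u v).edgeSet = insert s(u,v) H.edgeSet := by
  ext e
  induction e using Sym2.ind with
  | _ x y =>
    simp only [mem_edgeSet, sup_adj, edge_adj, Set.mem_insert_iff, Sym2.eq_iff]
    aesop

end AddHelpers

section Swap
variable (H : SimpleGraph W) {u v a y : W}
  (hay : H.Adj a y) (hua : ¬H.Adj u a) (hvy : ¬H.Adj v y)
  (hu_a : u ≠ a) (hu_y : u ≠ y) (hv_a : v ≠ a) (hv_y : v ≠ y)
include hay hua hvy hu_a hu_y hv_a hv_y

private lemma swap_ns_a :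
    ((H \ edge a y) ⊔ (edge u a ⊔ edge v y)).neighborSet a
      = insert u (H.neighborSet a \ {y}) := by
  have hay' : a ≠ y := hay.ne
  ext x
  simp only [mem_neighborSet, sup_adj, sdiff_adj, edge_adj, Set.mem_insert_iff,
    Set.mem_diff, Set.mem_singleton_iff]
  aesop

private lemma swap_ns_y :
    ((H \ edge a y) ⊔ (edge u a ⊔ edge v y)).neighborSet y
      = insert v (H.neighborSet y \ {a}) := by
  have hay' : a ≠ y := hay.ne
  ext x
  simp only [mem_neighborSet, sup_adj, sdiff_adj, edge_adj, Set.mem_insert_iff,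
    Set.mem_diff, Set.mem_singleton_iff]
  aesop

private lemma swap_ns_u (huv : u ≠ v) :
    ((H \ edge a y) ⊔ (edge u a ⊔ edge v y)).neighborSet u
      = insert a (H.neighborSet u) := by
  ext x
  simp only [mem_neighborSet, sup_adj, sdiff_adj, edge_adj, Set.mem_insert_iff]
  aesop

private lemma swap_ns_v (huv : u ≠ v) :
    ((H \ edge a y) ⊔ (edge u a ⊔ edge v y)).neighborSet v
      = insert y (H.neighborSet v) := by
  ext x
  simp only [mem_neighborSet, sup_adj, sdiff_adj, edge_adj, Set.mem_insert_iff]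
  aesop

private lemma swap_ns_other {w : W} (hwu : w ≠ u) (hwv : w ≠ v) (hwa : w ≠ a) (hwy : w ≠ y) :
    ((H \ edge a y) ⊔ (edge u a ⊔ edge v y)).neighborSet w = H.neighborSet w := by
  ext x
  simp only [mem_neighborSet, sup_adj, sdiff_adj, edge_adj]
  aesop

private lemma swap_es :
    ((H \ edge a y) ⊔ (edge u a ⊔ edge v y)).edgeSet
      = insert s(u,a) (insert s(v,y) (H.edgeSet \ {s(a,y)})) := by
  have hay' : a ≠ y := hay.ne
  ext e
  induction e using Sym2.ind with
  | _ x z =>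
    simp only [mem_edgeSet, sup_adj, sdiff_adj, edge_adj, Set.mem_insert_iff,
      Set.mem_diff, Set.mem_singleton_iff, Sym2.eq_iff]
    aesop

end Swap

private lemma swap_ns_vv (H : SimpleGraph W) {v a y : W}
    (hay : H.Adj a y) (hva : ¬H.Adj v a) (hvy : ¬H.Adj v y)
    (hv_a : v ≠ a) (hv_y : v ≠ y) :
    ((H \ edge a y) ⊔ (edge v a ⊔ edge v y)).neighborSet v
      = insert a (insert y (H.neighborSet v)) := by
  ext x
  simp only [mem_neighborSet, sup_adj, sdiff_adj, edge_adj, Set.mem_insert_iff]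
  aesop

private lemma main_lemma (Δ : ℕ) (hΔ : 1 ≤ Δ) (G₀ : SimpleGraph W) (SP : Finset W)
    (hiso : ∀ a ∈ SP, ∀ w, ¬ G₀.Adj a w)
    (hdeg0 : ∀ w, (G₀.neighborSet w).ncard ≤ Δ)
    (hpar : Even (Δ * Fintype.card W))
    (hm : 4 * Δ ≤ SP.card + 4) :
    ∃ H : SimpleGraph W, G₀ ≤ H ∧ ∀ w, (H.neighborSet w).ncard = Δ := by
  classical
  set C := Fintype.card (Sym2 W) with hC
  set P : ℕ → Prop := fun k => ∃ H : SimpleGraph W, G₀ ≤ H ∧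
    (∀ w, (H.neighborSet w).ncard ≤ Δ) ∧ H.edgeSet.ncard = k with hP
  have hle_C : ∀ (H : SimpleGraph W), H.edgeSet.ncard ≤ C := by
    intro H
    calc H.edgeSet.ncard ≤ (Set.univ : Set (Sym2 W)).ncard :=
          Set.ncard_le_ncard (Set.subset_univ _) Set.finite_univ
      _ = C := by rw [Set.ncard_univ, Nat.card_eq_fintype_card]
  have hP0 : P (G₀.edgeSet.ncard) := ⟨G₀, le_refl _, hdeg0, rfl⟩
  have hPk : P (Nat.findGreatest P C) := Nat.findGreatest_spec (hle_C G₀) hP0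
  obtain ⟨H, hle, hdeg, hcard⟩ := hPk
  refine ⟨H, hle, ?_⟩
  by_contra hcon
  push_neg at hcon
  have hmax : ∀ H' : SimpleGraph W, G₀ ≤ H' → (∀ w, (H'.neighborSet w).ncard ≤ Δ) →
      H'.edgeSet.ncard ≤ H.edgeSet.ncard := by
    intro H' h1 h2
    by_contra hgt
    push_neg at hgt
    rw [hcard] at hgt
    exact Nat.findGreatest_is_greatest hgt (hle_C H') ⟨H', h1, h2, rfl⟩
  -- any two distinct deficient vertices are adjacent
  have hadj : ∀ u v : W, u ≠ v → (H.neighborSet u).ncard < Δ →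
      (H.neighborSet v).ncard < Δ → H.Adj u v := by
    intro u v huv hdu hdv
    by_contra hna
    have h1 : G₀ ≤ H ⊔ edge u v := le_trans hle le_sup_left
    have h2 : ∀ w, ((H ⊔ edge u v).neighborSet w).ncard ≤ Δ := by
      intro w
      by_cases hwu : w = u
      · subst hwu
        rw [add_ns_u H huv hna, Set.ncard_insert_of_notMem (by
          simp only [mem_neighborSet]; exact fun h => hna h) (Set.toFinite _)]
        omega
      · by_cases hwv : w = v
        · subst hwv
          rw [add_ns_v H huv hna, Set.ncard_insert_of_notMem (by
            simp only [mem_neighborSet]; exact fun h => hna h.symm) (Set.toFinite _)]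
          omega
        · rw [add_ns_other H huv hna hwu hwv]
          exact hdeg w
    have h3 : (H ⊔ edge u v).edgeSet.ncard = H.edgeSet.ncard + 1 := by
      rw [add_es H huv hna, Set.ncard_insert_of_notMem (by
        simp only [mem_edgeSet]; exact hna) (Set.toFinite _)]
    have := hmax _ h1 h2
    omega
  -- swap move, distinct case
  have hswapA : ∀ u v a y : W, u ≠ v → (H.neighborSet u).ncard < Δ →
      (H.neighborSet v).ncard < Δ → ¬H.Adj u a → ¬H.Adj v y → u ≠ a → u ≠ y →
      v ≠ a → v ≠ y → H.Adj a y → ¬G₀.Adj a y → False := by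
    intro u v a y huv hdu hdv hua hvy hu_a hu_y hv_a hv_y hay hg0
    have hay' : a ≠ y := hay.ne
    have h1 : G₀ ≤ (H \ edge a y) ⊔ (edge u a ⊔ edge v y) := by
      intro x z hxz
      refine Or.inl ⟨hle hxz, ?_⟩
      rw [edge_adj]
      rintro ⟨(⟨rfl, rfl⟩ | ⟨rfl, rfl⟩), -⟩
      · exact hg0 hxz
      · exact hg0 hxz.symm
    have h2 : ∀ w, (((H \ edge a y) ⊔ (edge u a ⊔ edge v y)).neighborSet w).ncard ≤ Δ := by
      intro w
      by_cases hwu : w = u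
      · subst hwu
        rw [swap_ns_u H hay hua hvy hu_a hu_y hv_a hv_y huv,
          Set.ncard_insert_of_notMem (by
            simp only [mem_neighborSet]; exact fun h => hua h) (Set.toFinite _)]
        omega
      · by_cases hwv : w = v
        · subst hwv
          rw [swap_ns_v H hay hua hvy hu_a hu_y hv_a hv_y huv,
            Set.ncard_insert_of_notMem (by
              simp only [mem_neighborSet]; exact fun h => hvy h) (Set.toFinite _)]
          omega
        · by_cases hwa : w = a
          · subst hwa
            rw [swap_ns_a H hay hua hvy hu_a hu_y hv_a hv_y,
              Set.ncard_insert_of_notMem (by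
                simp only [Set.mem_diff, mem_neighborSet, Set.mem_singleton_iff]
                exact fun h => hua h.1.symm) (Set.toFinite _),
              Set.ncard_diff_singleton_of_mem (s := H.neighborSet _) (by
                simp only [mem_neighborSet]; exact hay)]
            have := hdeg w
            omega
          · by_cases hwy : w = y
            · subst hwy
              rw [swap_ns_y H hay hua hvy hu_a hu_y hv_a hv_y,
                Set.ncard_insert_of_notMem (by
                  simp only [Set.mem_diff, mem_neighborSet, Set.mem_singleton_iff]
                  exact fun h => hvy h.1.symm) (Set.toFinite _),
                Set.ncard_diff_singleton_of_mem (s := H.neighborSet _) (by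
                  simp only [mem_neighborSet]; exact hay.symm)]
              have := hdeg w
              omega
            · rw [swap_ns_other H hay hua hvy hu_a hu_y hv_a hv_y hwu hwv hwa hwy]
              exact hdeg w
    have h3 : (((H \ edge a y) ⊔ (edge u a ⊔ edge v y)).edgeSet).ncard
        = H.edgeSet.ncard + 1 := by
      have he1 : s(a,y) ∈ H.edgeSet := hay
      have hk1 : 1 ≤ H.edgeSet.ncard := by
        have : ({s(a,y)} : Set (Sym2 W)) ⊆ H.edgeSet := by
          simp only [Set.singleton_subset_iff]; exact he1
        calc 1 = ({s(a,y)} : Set (Sym2 W)).ncard := (Set.ncard_singleton _).symm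
          _ ≤ H.edgeSet.ncard := Set.ncard_le_ncard this (Set.toFinite _)
      rw [swap_es H hay hua hvy hu_a hu_y hv_a hv_y,
        Set.ncard_insert_of_notMem (by
          intro hmem
          rcases Set.mem_insert_iff.mp hmem with h | h
          · rw [Sym2.eq_iff] at h
            rcases h with ⟨rfl, rfl⟩ | ⟨rfl, rfl⟩
            · exact huv rfl
            · exact hv_a rfl
          · exact hua h.1) (Set.toFinite _),
        Set.ncard_insert_of_notMem (by
          simp only [Set.mem_diff, mem_edgeSet]
          exact fun h => hvy h.1) (Set.toFinite _),
        Set.ncard_diff_singleton_of_mem he1]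
      omega
    have := hmax _ h1 h2
    omega
  -- swap move, equal case
  have hswapB : ∀ v a y : W, (H.neighborSet v).ncard + 2 ≤ Δ →
      ¬H.Adj v a → ¬H.Adj v y → v ≠ a → v ≠ y → H.Adj a y → ¬G₀.Adj a y → False := by
    intro v a y hdv hva hvy hv_a hv_y hay hg0
    have hay' : a ≠ y := hay.ne
    have h1 : G₀ ≤ (H \ edge a y) ⊔ (edge v a ⊔ edge v y) := by
      intro x z hxz
      refine Or.inl ⟨hle hxz, ?_⟩
      rw [edge_adj]
      rintro ⟨(⟨rfl, rfl⟩ | ⟨rfl, rfl⟩), -⟩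
      · exact hg0 hxz
      · exact hg0 hxz.symm
    have h2 : ∀ w, (((H \ edge a y) ⊔ (edge v a ⊔ edge v y)).neighborSet w).ncard ≤ Δ := by
      intro w
      by_cases hwv : w = v
      · subst hwv
        rw [swap_ns_vv H hay hva hvy hv_a hv_y,
          Set.ncard_insert_of_notMem (by
            intro hmem
            rcases Set.mem_insert_iff.mp hmem with h | h
            · exact hay' h
            · exact hva h) (Set.toFinite _),
          Set.ncard_insert_of_notMem (by
            simp only [mem_neighborSet]; exact fun h => hvy h) (Set.toFinite _)]
        omega
      · by_cases hwa : w = a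
        · subst hwa
          rw [swap_ns_a H hay hva hvy hv_a hv_y hv_a hv_y,
            Set.ncard_insert_of_notMem (by
              simp only [Set.mem_diff, mem_neighborSet, Set.mem_singleton_iff]
              exact fun h => hva h.1.symm) (Set.toFinite _),
            Set.ncard_diff_singleton_of_mem (s := H.neighborSet _) (by
              simp only [mem_neighborSet]; exact hay)]
          have := hdeg w
          omega
        · by_cases hwy : w = y
          · subst hwy
            rw [swap_ns_y H hay hva hvy hv_a hv_y hv_a hv_y,
              Set.ncard_insert_of_notMem (by
                simp only [Set.mem_diff, mem_neighborSet, Set.mem_singleton_iff]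
                exact fun h => hvy h.1.symm) (Set.toFinite _),
              Set.ncard_diff_singleton_of_mem (s := H.neighborSet _) (by
                simp only [mem_neighborSet]; exact hay.symm)]
            have := hdeg w
            omega
          · rw [swap_ns_other H hay hva hvy hv_a hv_y hv_a hv_y hwv hwv hwa hwy]
            exact hdeg w
    have h3 : (((H \ edge a y) ⊔ (edge v a ⊔ edge v y)).edgeSet).ncard
        = H.edgeSet.ncard + 1 := by
      have he1 : s(a,y) ∈ H.edgeSet := hay
      have hk1 : 1 ≤ H.edgeSet.ncard := by
        have : ({s(a,y)} : Set (Sym2 W)) ⊆ H.edgeSet := by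
          simp only [Set.singleton_subset_iff]; exact he1
        calc 1 = ({s(a,y)} : Set (Sym2 W)).ncard := (Set.ncard_singleton _).symm
          _ ≤ H.edgeSet.ncard := Set.ncard_le_ncard this (Set.toFinite _)
      rw [swap_es H hay hva hvy hv_a hv_y hv_a hv_y,
        Set.ncard_insert_of_notMem (by
          intro hmem
          rcases Set.mem_insert_iff.mp hmem with h | h
          · rw [Sym2.eq_iff] at h
            rcases h with ⟨-, h2⟩ | ⟨rfl, rfl⟩
            · exact hay' h2
            · exact hv_y rfl
          · exact hva h.1) (Set.toFinite _),
        Set.ncard_insert_of_notMem (by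
          simp only [Set.mem_diff, mem_edgeSet]
          exact fun h => hvy h.1) (Set.toFinite _),
        Set.ncard_diff_singleton_of_mem he1]
      omega
    have := hmax _ h1 h2
    omega
  letI : DecidableRel H.Adj := Classical.decRel _
  have hns : ∀ w, (H.neighborSet w).ncard = H.degree w := fun w => ncard_ns H w
  obtain ⟨v₀, hv₀⟩ : ∃ v₀, (H.neighborSet v₀).ncard < Δ := by
    obtain ⟨w, hw⟩ := hcon
    exact ⟨w, lt_of_le_of_ne (hdeg w) hw⟩
  obtain ⟨S, hD_sub, hS_card, hS_sum, hS_closed⟩ :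
      ∃ S : Finset W, (∀ w, (H.neighborSet w).ncard < Δ → w ∈ S) ∧
        (S.card + 2 ≤ 2 * Δ) ∧ ((∑ s ∈ S, H.degree s) + 2 ≤ Δ * S.card) ∧
        (∀ a ∈ SP, a ∉ S → ∀ y, H.Adj a y → y ∈ S) := by
    by_cases hex : ∃ u v : W, u ≠ v ∧ (H.neighborSet u).ncard < Δ ∧
        (H.neighborSet v).ncard < Δ
    · obtain ⟨u, v, huv, hdu, hdv⟩ := hex
      have hauv : H.Adj u v := hadj u v huv hdu hdv
      have hdu' : H.degree u < Δ := by rw [← hns u]; exact hdu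
      have hdv' : H.degree v < Δ := by rw [← hns v]; exact hdv
      refine ⟨(insert u (H.neighborFinset u)) ∪ (insert v (H.neighborFinset v)),
        ?_, ?_, ?_, ?_⟩
      · intro w hw
        by_cases hwu : w = u
        · subst hwu; exact mem_union_left _ (mem_insert_self _ _)
        · have := hadj u w (fun h => hwu h.symm) hdu hw
          exact mem_union_left _ (mem_insert_of_mem ((mem_neighborFinset _ _ _).mpr this))
      · have hcu : (insert u (H.neighborFinset u)).card = H.degree u + 1 := by
          rw [card_insert_of_notMem (by simp)]
          rfl
        have hcv : (insert v (H.neighborFinset v)).card = H.degree v + 1 := by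
          rw [card_insert_of_notMem (by simp)]
          rfl
        have hunion := Finset.card_union_add_card_inter
          (insert u (H.neighborFinset u)) (insert v (H.neighborFinset v))
        rw [hcu, hcv] at hunion
        have hu2 : u ∈ (insert u (H.neighborFinset u)) ∩ (insert v (H.neighborFinset v)) :=
          mem_inter.mpr ⟨mem_insert_self _ _,
            mem_insert_of_mem ((mem_neighborFinset _ _ _).mpr hauv.symm)⟩
        have hv2 : v ∈ (insert u (H.neighborFinset u)) ∩ (insert v (H.neighborFinset v)) :=
          mem_inter.mpr ⟨mem_insert_of_mem ((mem_neighborFinset _ _ _).mpr hauv),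
            mem_insert_self _ _⟩
        have hpair : ({u, v} : Finset W) ⊆
            (insert u (H.neighborFinset u)) ∩ (insert v (H.neighborFinset v)) :=
          Finset.insert_subset_iff.mpr ⟨hu2, Finset.singleton_subset_iff.mpr hv2⟩
        have h2card : 2 ≤ ((insert u (H.neighborFinset u)) ∩
            (insert v (H.neighborFinset v))).card := by
          calc 2 = ({u, v} : Finset W).card := (Finset.card_pair huv).symm
            _ ≤ _ := Finset.card_le_card hpair
        omega
      · have hsubS : ({u, v} : Finset W) ⊆
            (insert u (H.neighborFinset u)) ∪ (insert v (H.neighborFinset v)) :=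
          Finset.insert_subset_iff.mpr ⟨mem_union_left _ (mem_insert_self _ _),
            Finset.singleton_subset_iff.mpr (mem_union_right _ (mem_insert_self _ _))⟩
        have t1 : ∑ s ∈ ({u, v} : Finset W), (Δ - H.degree s)
            = (Δ - H.degree u) + (Δ - H.degree v) := Finset.sum_pair huv
        have t2 : ∑ s ∈ ({u, v} : Finset W), (Δ - H.degree s)
            ≤ ∑ s ∈ (insert u (H.neighborFinset u)) ∪ (insert v (H.neighborFinset v)),
              (Δ - H.degree s) := Finset.sum_le_sum_of_subset hsubS
        have t3 : ∑ s ∈ (insert u (H.neighborFinset u)) ∪ (insert v (H.neighborFinset v)),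
              (Δ - H.degree s)
            + ∑ s ∈ (insert u (H.neighborFinset u)) ∪ (insert v (H.neighborFinset v)),
              H.degree s
            = Δ * ((insert u (H.neighborFinset u)) ∪ (insert v (H.neighborFinset v))).card := by
          rw [← Finset.sum_add_distrib]
          have : ∀ s ∈ (insert u (H.neighborFinset u)) ∪ (insert v (H.neighborFinset v)),
              (Δ - H.degree s) + H.degree s = Δ := fun s _ =>
            Nat.sub_add_cancel (by rw [← hns s]; exact hdeg s)
          rw [Finset.sum_congr rfl this, Finset.sum_const, smul_eq_mul, mul_comm]
        omega
      · intro a haSP haS y hAy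
        by_contra hyS
        simp only [mem_union, mem_insert, mem_neighborFinset, not_or] at haS hyS
        exact hswapA u v a y huv hdu hdv
          (fun h => haS.1.2 h) (fun h => hyS.2.2 h)
          (fun h => haS.1.1 h.symm) (fun h => hyS.1.1 h.symm)
          (fun h => haS.2.1 h.symm) (fun h => hyS.2.1 h.symm)
          hAy (hiso a haSP y)
    · push_neg at hex
      have huniq : ∀ w, (H.neighborSet w).ncard < Δ → w = v₀ := by
        intro w hw
        by_contra hne
        exact absurd hv₀ (not_lt.mpr (hex w v₀ hne hw))
      have hhs : ∑ w, H.degree w = 2 * H.edgeFinset.card :=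
        H.sum_degrees_eq_twice_card_edges
      have hsum : ∑ w : W, (Δ - H.degree w) + ∑ w : W, H.degree w
          = Δ * Fintype.card W := by
        rw [← Finset.sum_add_distrib]
        have : ∀ w ∈ (univ : Finset W), (Δ - H.degree w) + H.degree w = Δ := fun w _ =>
          Nat.sub_add_cancel (by rw [← hns w]; exact hdeg w)
        rw [Finset.sum_congr rfl this, Finset.sum_const, smul_eq_mul, mul_comm,
          Finset.card_univ]
      have hsingle : ∑ w : W, (Δ - H.degree w) = Δ - H.degree v₀ := by
        refine Finset.sum_eq_single v₀ (fun w _ hwne => ?_) (fun h => absurd (mem_univ v₀) h)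
        have hw : ¬((H.neighborSet w).ncard < Δ) := fun hlt => hwne (huniq w hlt)
        rw [hns w] at hw
        omega
      obtain ⟨c, hc⟩ := hpar
      have hd0 : H.degree v₀ < Δ := by rw [← hns v₀]; exact hv₀
      have hv2 : H.degree v₀ + 2 ≤ Δ := by omega
      have hv2' : (H.neighborSet v₀).ncard + 2 ≤ Δ := by rw [hns v₀]; exact hv2
      refine ⟨insert v₀ (H.neighborFinset v₀), ?_, ?_, ?_, ?_⟩
      · intro w hw
        rw [huniq w hw]
        exact mem_insert_self _ _
      · have hcv : (insert v₀ (H.neighborFinset v₀)).card = H.degree v₀ + 1 := by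
          rw [card_insert_of_notMem (by simp)]
          rfl
        omega
      · have hsubS : ({v₀} : Finset W) ⊆ insert v₀ (H.neighborFinset v₀) :=
          Finset.singleton_subset_iff.mpr (mem_insert_self _ _)
        have t1 : ∑ s ∈ ({v₀} : Finset W), (Δ - H.degree s) = Δ - H.degree v₀ :=
          Finset.sum_singleton _ _
        have t2 : ∑ s ∈ ({v₀} : Finset W), (Δ - H.degree s)
            ≤ ∑ s ∈ insert v₀ (H.neighborFinset v₀), (Δ - H.degree s) :=
          Finset.sum_le_sum_of_subset hsubS
        have t3 : ∑ s ∈ insert v₀ (H.neighborFinset v₀), (Δ - H.degree s)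
            + ∑ s ∈ insert v₀ (H.neighborFinset v₀), H.degree s
            = Δ * (insert v₀ (H.neighborFinset v₀)).card := by
          rw [← Finset.sum_add_distrib]
          have : ∀ s ∈ insert v₀ (H.neighborFinset v₀),
              (Δ - H.degree s) + H.degree s = Δ := fun s _ =>
            Nat.sub_add_cancel (by rw [← hns s]; exact hdeg s)
          rw [Finset.sum_congr rfl this, Finset.sum_const, smul_eq_mul, mul_comm]
        omega
      · intro a haSP haS y hAy
        by_contra hyS
        simp only [mem_insert, mem_neighborFinset, not_or] at haS hyS
        exact hswapB v₀ a y hv2' (fun h => haS.2 h) (fun h => hyS.2 h)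
          (fun h => haS.1 h.symm) (fun h => hyS.1 h.symm) hAy (hiso a haSP y)
  -- final counting
  have hfull : ∀ x ∈ SP \ S, H.degree x = Δ := by
    intro x hx
    have hxS := (mem_sdiff.mp hx).2
    have h1 : ¬((H.neighborSet x).ncard < Δ) := fun hlt => hxS (hD_sub x hlt)
    have h2 := hdeg x
    rw [hns x] at h1 h2
    omega
  have hnfsub : ∀ x ∈ SP \ S, H.neighborFinset x ⊆ S := by
    intro x hx z hz
    obtain ⟨hxSP, hxS⟩ := mem_sdiff.mp hx
    exact hS_closed x hxSP hxS z ((mem_neighborFinset _ _ _).mp hz)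
  have hc1 : ∑ x ∈ SP \ S, H.degree x = Δ * (SP \ S).card := by
    rw [Finset.sum_congr rfl hfull, Finset.sum_const, smul_eq_mul, mul_comm]
  have hc2 : ∑ x ∈ SP \ S, H.degree x
      = ∑ x ∈ SP \ S, ∑ s ∈ S, (if H.Adj x s then 1 else 0) := by
    refine Finset.sum_congr rfl fun x hx => ?_
    rw [← Finset.card_filter]
    have hfe : S.filter (fun s => H.Adj x s) = H.neighborFinset x := by
      ext z
      simp only [mem_filter, mem_neighborFinset]
      exact ⟨fun h => h.2, fun h => ⟨hnfsub x hx ((mem_neighborFinset _ _ _).mpr h), h⟩⟩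
    rw [hfe]
    rfl
  have hc3 : ∑ s ∈ S, ∑ x ∈ SP \ S, (if H.Adj x s then 1 else 0)
      ≤ ∑ s ∈ S, H.degree s := by
    refine Finset.sum_le_sum fun s hs => ?_
    rw [← Finset.card_filter]
    refine Finset.card_le_card ?_
    intro x hx
    simp only [mem_filter] at hx
    exact (mem_neighborFinset _ _ _).mpr hx.2.symm
  have hmul : Δ * (SP \ S).card < Δ * S.card := by
    calc Δ * (SP \ S).card = ∑ x ∈ SP \ S, H.degree x := hc1.symm
      _ = ∑ s ∈ S, ∑ x ∈ SP \ S, (if H.Adj x s then 1 else 0) := by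
          rw [hc2]; exact Finset.sum_comm
      _ ≤ ∑ s ∈ S, H.degree s := hc3
      _ < (∑ s ∈ S, H.degree s) + 2 := by norm_num
      _ ≤ Δ * S.card := hS_sum
  have hlt : (SP \ S).card < S.card := Nat.lt_of_mul_lt_mul_left hmul
  have hsplit := Finset.card_inter_add_card_sdiff SP S
  have hIS : (SP ∩ S).card ≤ S.card := Finset.card_le_card Finset.inter_subset_right
  omega
end Helpers

theorem stmt3 {V : Type} [Fintype V] (G : SimpleGraph V) [DecidableRel G.Adj]
    (h : 1 ≤ G.maxDegree) :
    ∃ (W : Type) (H : SimpleGraph W) (f : V → W),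
      Finite W ∧ Function.Injective f ∧
      (∀ v w, G.Adj v w → H.Adj (f v) (f w)) ∧
      (∀ w : W, (H.neighborSet w).ncard = G.maxDegree) ∧
      Nat.card W < Fintype.card V + 4 * G.maxDegree := by
  classical
  set Δ := G.maxDegree with hΔdef
  set n := Fintype.card V with hn
  set m : ℕ := 4 * (Δ - 1) + (if Even (Δ * (n + 4 * (Δ - 1))) then 0 else 1) with hmdef
  have hm4 : 4 * (Δ - 1) ≤ m ∧ m ≤ 4 * (Δ - 1) + 1 := by
    constructor <;> (rw [hmdef]; split <;> omega)
  have hparW : Even (Δ * (n + m)) := by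
    rw [hmdef]
    split
    · next he => simpa using he
    · next he =>
      have h1 : Odd (Δ * (n + 4 * (Δ - 1))) := Nat.odd_iff.mpr (by
        rcases Nat.even_or_odd (Δ * (n + 4 * (Δ - 1))) with h2 | h2
        · exact absurd h2 he
        · exact Nat.odd_iff.mp h2)
      obtain ⟨hΔodd, hKodd⟩ := Nat.odd_mul.mp h1
      have : Even (n + (4 * (Δ - 1) + 1)) := by
        rcases hKodd with ⟨k, hk⟩
        exact ⟨k + 1, by omega⟩
      exact this.mul_left Δ
  -- the base graph on V ⊕ Fin m
  set G₀ : SimpleGraph (V ⊕ Fin m) := G.map Function.Embedding.inl with hG₀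
  have hmapadj : ∀ a b : V, G₀.Adj (Sum.inl a) (Sum.inl b) ↔ G.Adj a b := by
    intro a b
    rw [hG₀, SimpleGraph.map_adj]
    constructor
    · rintro ⟨x, y, hxy, hx, hy⟩
      simp only [Function.Embedding.inl_apply, Sum.inl.injEq] at hx hy
      subst hx; subst hy; exact hxy
    · intro hab
      exact ⟨a, b, hab, rfl, rfl⟩
  have hiso : ∀ a ∈ (univ.image (Sum.inr : Fin m → V ⊕ Fin m)), ∀ w, ¬ G₀.Adj a w := by
    intro a ha w hadj
    obtain ⟨i, -, rfl⟩ := Finset.mem_image.mp ha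
    rw [hG₀, SimpleGraph.map_adj] at hadj
    obtain ⟨x, y, -, hx, -⟩ := hadj
    exact Sum.inl_ne_inr hx
  have hdeg0 : ∀ w, (G₀.neighborSet w).ncard ≤ Δ := by
    intro w
    match w with
    | Sum.inl a =>
      have : G₀.neighborSet (Sum.inl a) = Sum.inl '' (G.neighborSet a) := by
        ext x
        match x with
        | Sum.inl b =>
          simp only [mem_neighborSet, Set.mem_image]
          rw [hmapadj]
          constructor
          · intro hb; exact ⟨b, hb, rfl⟩
          · rintro ⟨c, hc, hcc⟩
            simp only [Sum.inl.injEq] at hcc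
            subst hcc; exact hc
        | Sum.inr i =>
          simp only [mem_neighborSet, Set.mem_image]
          constructor
          · intro hadj
            rw [hG₀, SimpleGraph.map_adj] at hadj
            obtain ⟨x, y, -, -, hy⟩ := hadj
            exact (Sum.inl_ne_inr hy).elim
          · rintro ⟨c, -, hcc⟩
            exact (Sum.inl_ne_inr hcc).elim
      rw [this, Set.ncard_image_of_injective _ Sum.inl_injective, ncard_ns]
      exact G.degree_le_maxDegree a
    | Sum.inr i =>
      have : G₀.neighborSet (Sum.inr i) = ∅ := by
        ext x
        simp only [mem_neighborSet, Set.mem_empty_iff_false, iff_false]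
        intro hadj
        rw [hG₀, SimpleGraph.map_adj] at hadj
        obtain ⟨x', y', -, hx, -⟩ := hadj
        exact Sum.inl_ne_inr hx
      rw [this]
      simp
  have hcardW : Fintype.card (V ⊕ Fin m) = n + m := by
    rw [Fintype.card_sum, Fintype.card_fin, hn]
  have hSPcard : (univ.image (Sum.inr : Fin m → V ⊕ Fin m)).card = m := by
    rw [Finset.card_image_of_injective _ Sum.inr_injective, Finset.card_univ,
      Fintype.card_fin]
  have hΔ1 : 1 ≤ Δ := h
  obtain ⟨H, hle, hreg⟩ := main_lemma Δ hΔ1 G₀ (univ.image Sum.inr) hiso hdeg0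
    (by rw [hcardW]; exact hparW) (by rw [hSPcard]; omega)
  refine ⟨V ⊕ Fin m, H, Sum.inl, Finite.of_fintype _, Sum.inl_injective, ?_, hreg, ?_⟩
  · intro v w hvw
    exact hle ((hmapadj v w).mpr hvw)
  · rw [Nat.card_eq_fintype_card, hcardW]
    omega
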